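/- For τ = 0 and 0 < α ≤ 1, ρ_mSt(w; α, 0) ∼ (1/α) w^{−1}/log²(w) as w → ∞. -/

import Mathlib

open Real Filter intervalIntegral

section Aux
open Set MeasureTheory

lemma gammaLB : ∃ m : ℝ, 0 < m ∧ ∀ x ∈ Set.Ioc (0:ℝ) 1, m ≤ Real.Gamma x := by
  have hcont : ContinuousOn Real.Gamma (Set.Icc (1:ℝ) 2) := by
    intro x hx
    refine (Real.differentiableAt_Gamma ?_).continuousAt.continuousWithinAt
    intro m
    have : (0:ℝ) ≤ m := Nat.cast_nonneg m
    linarith [hx.1]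
  obtain ⟨x0, hx0, hmin⟩ := isCompact_Icc.exists_isMinOn (Set.nonempty_Icc.mpr (by norm_num)) hcont
  refine ⟨Real.Gamma x0, Real.Gamma_pos_of_pos (by linarith [hx0.1]), ?_⟩
  intro x hx
  have h1 : Real.Gamma (x + 1) = x * Real.Gamma x := Real.Gamma_add_one (ne_of_gt hx.1)
  have h2 : Real.Gamma x0 ≤ Real.Gamma (x + 1) := hmin ⟨by linarith [hx.1], by linarith [hx.2]⟩
  have h3 : 0 < Real.Gamma x := Real.Gamma_pos_of_pos hx.1
  nlinarith [hx.1, hx.2]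

lemma mainLimit (α : ℝ) (h0 : 0 < α) (h1 : α ≤ 1) :
    Tendsto (fun w : ℝ => ∫ u : ℝ, (Set.Ioo (0:ℝ) (α * Real.log w)).indicator
      (fun u => u / Real.Gamma (1 - u / Real.log w) * Real.exp (-u)) u)
    atTop (nhds 1) := by
  obtain ⟨m, hm, hmle⟩ := gammaLB
  have hGamma1 : ContinuousAt Real.Gamma 1 := by
    refine (Real.differentiableAt_Gamma ?_).continuousAt
    intro k
    have hk : (0:ℝ) ≤ k := Nat.cast_nonneg k
    intro h; linarith
  have key := MeasureTheory.tendsto_integral_filter_of_dominated_convergence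
    (μ := volume) (l := atTop)
    (F := fun w : ℝ => (Set.Ioo (0:ℝ) (α * Real.log w)).indicator
      (fun u => u / Real.Gamma (1 - u / Real.log w) * Real.exp (-u)))
    (f := (Set.Ioi (0:ℝ)).indicator (fun u => u * Real.exp (-u)))
    (bound := (Set.Ioi (0:ℝ)).indicator (fun u => (1/m) * (u * Real.exp (-u))))
    ?_ ?_ ?_ ?_
  · -- ∫ f = 1
    have : (∫ u : ℝ, (Set.Ioi (0:ℝ)).indicator (fun u => u * Real.exp (-u)) u) = 1 := by
      rw [MeasureTheory.integral_indicator measurableSet_Ioi]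
      have h2 : Real.Gamma 2 = ∫ x in Set.Ioi (0:ℝ), Real.exp (-x) * x ^ ((2:ℝ) - 1) :=
        Real.Gamma_eq_integral (by norm_num)
      have hG2 : Real.Gamma 2 = 1 := by
        rw [show (2:ℝ) = 1 + 1 by norm_num, Real.Gamma_add_one one_ne_zero, Real.Gamma_one,
          mul_one]
      rw [← hG2, h2]
      refine setIntegral_congr_fun measurableSet_Ioi (fun x hx => ?_)
      rw [show (2:ℝ) - 1 = 1 by norm_num, Real.rpow_one]; ring
    rwa [this] at key
  · -- measurability
    filter_upwards [eventually_gt_atTop 1] with w hw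
    have hL : 0 < Real.log w := Real.log_pos hw
    rw [aestronglyMeasurable_indicator_iff measurableSet_Ioo]
    refine ContinuousOn.aestronglyMeasurable ?_ measurableSet_Ioo
    intro u hu
    have hu1 : 0 < 1 - u / Real.log w := by
      have : u / Real.log w < α := (div_lt_iff₀ hL).mpr (by linarith [hu.2])
      linarith
    refine ContinuousWithinAt.mul (ContinuousWithinAt.div ?_ ?_ ?_) ?_
    · exact continuousWithinAt_id
    · refine ContinuousAt.continuousWithinAt ?_
      have hin : ContinuousAt (fun u : ℝ => 1 - u / Real.log w) u :=
        (continuous_const.sub (continuous_id.div_const _)).continuousAt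
      have hout : ContinuousAt Real.Gamma (1 - u / Real.log w) := by
        refine (Real.differentiableAt_Gamma ?_).continuousAt
        intro k
        have hk : (0:ℝ) ≤ k := Nat.cast_nonneg k
        intro h; rw [h] at hu1; simp at hu1; linarith
      exact ContinuousAt.comp (f := fun u : ℝ => 1 - u / Real.log w) hout hin
    · exact ne_of_gt (Real.Gamma_pos_of_pos hu1)
    · exact (Real.continuous_exp.comp continuous_neg).continuousAt.continuousWithinAt
  · -- bound
    filter_upwards [eventually_gt_atTop 1] with w hw
    refine MeasureTheory.ae_of_all _ (fun u => ?_)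
    have hL : 0 < Real.log w := Real.log_pos hw
    by_cases hu : u ∈ Set.Ioo (0:ℝ) (α * Real.log w)
    · rw [Set.indicator_of_mem hu, Set.indicator_of_mem (Set.mem_Ioi.mpr hu.1)]
      have hs : u / Real.log w ∈ Set.Ioo (0:ℝ) 1 := by
        constructor
        · exact div_pos hu.1 hL
        · have : u / Real.log w < α := (div_lt_iff₀ hL).mpr (by linarith [hu.2])
          linarith
      have hΓ : m ≤ Real.Gamma (1 - u / Real.log w) :=
        hmle _ ⟨by linarith [hs.2], by linarith [hs.1]⟩
      have hΓ0 : 0 < Real.Gamma (1 - u / Real.log w) := lt_of_lt_of_le hm hΓ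
      have he : 0 < Real.exp (-u) := Real.exp_pos _
      have hnn : 0 ≤ u / Real.Gamma (1 - u / Real.log w) * Real.exp (-u) :=
        mul_nonneg (div_nonneg hu.1.le hΓ0.le) he.le
      rw [Real.norm_eq_abs, abs_of_nonneg hnn]
      rw [div_mul_eq_mul_div, div_le_iff₀ hΓ0]
      have h01 : (1/m) * (u * Real.exp (-u)) * m ≤ (1/m) * (u * Real.exp (-u)) * Real.Gamma (1 - u / Real.log w) := by
        have : 0 ≤ (1/m) * (u * Real.exp (-u)) := mul_nonneg (by positivity) (mul_nonneg hu.1.le he.le)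
        exact mul_le_mul_of_nonneg_left hΓ this
      calc u * Real.exp (-u) = (1/m) * (u * Real.exp (-u)) * m := by field_simp
        _ ≤ _ := h01
    · rw [Set.indicator_of_notMem hu, norm_zero]
      refine Set.indicator_nonneg (fun x hx => ?_) u
      have : (0:ℝ) < x := hx
      positivity
  · -- integrability of bound
    rw [MeasureTheory.integrable_indicator_iff measurableSet_Ioi]
    have := (Real.GammaIntegral_convergent (by norm_num : (0:ℝ) < 2)).const_mul (1/m)
    refine MeasureTheory.IntegrableOn.congr_fun this (fun x hx => ?_) measurableSet_Ioi
    rw [show (2:ℝ) - 1 = 1 by norm_num, Real.rpow_one]; ring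
  · -- pointwise limit
    refine MeasureTheory.ae_of_all _ (fun u => ?_)
    by_cases hu : 0 < u
    · rw [Set.indicator_of_mem (Set.mem_Ioi.mpr hu)]
      have hev : ∀ᶠ w : ℝ in atTop, u < α * Real.log w := by
        have ht : Tendsto (fun w : ℝ => α * Real.log w) atTop atTop :=
          Real.tendsto_log_atTop.const_mul_atTop h0
        exact ht.eventually_gt_atTop u
      have htend : Tendsto (fun w : ℝ => u / Real.Gamma (1 - u / Real.log w) * Real.exp (-u))
          atTop (nhds (u * Real.exp (-u))) := by
        have h2 : Tendsto (fun w : ℝ => 1 - u / Real.log w) atTop (nhds 1) := by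
          have h3 : Tendsto (fun w : ℝ => u / Real.log w) atTop (nhds 0) := by
            simpa [div_eq_mul_inv] using
              (Real.tendsto_log_atTop.inv_tendsto_atTop).const_mul u
          simpa using tendsto_const_nhds.sub h3
        have h4 : Tendsto (fun w : ℝ => Real.Gamma (1 - u / Real.log w)) atTop (nhds 1) := by
          have := hGamma1.tendsto.comp h2
          simpa [Real.Gamma_one, Function.comp_def] using this
        have h5 : Tendsto (fun w : ℝ => u / Real.Gamma (1 - u / Real.log w)) atTop (nhds u) := by
          simpa [Pi.div_def] using tendsto_const_nhds.div h4 one_ne_zero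
        simpa using h5.mul tendsto_const_nhds
      refine htend.congr' ?_
      filter_upwards [hev] with w hw
      rw [Set.indicator_of_mem (Set.mem_Ioo.mpr ⟨hu, hw⟩)]
    · have : ∀ w : ℝ, (Set.Ioo (0:ℝ) (α * Real.log w)).indicator
          (fun u => u / Real.Gamma (1 - u / Real.log w) * Real.exp (-u)) u = 0 := by
        intro w
        exact Set.indicator_of_notMem (fun h => hu h.1) _
      simp only [this]
      rw [Set.indicator_of_notMem (by simpa using hu)]
      exact tendsto_const_nhds


lemma keyEq (α : ℝ) (h0 : 0 < α) (w : ℝ) (hw : 1 < w) :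
    (Real.log w)^2 * w * (∫ s in (0:ℝ)..α, (s / Real.Gamma (1-s)) * w ^ (-1-s)) =
    ∫ u : ℝ, (Set.Ioo (0:ℝ) (α * Real.log w)).indicator
      (fun u => u / Real.Gamma (1 - u / Real.log w) * Real.exp (-u)) u := by
  have hw0 : (0:ℝ) < w := lt_trans one_pos hw
  have hL : 0 < Real.log w := Real.log_pos hw
  have hLne : Real.log w ≠ 0 := ne_of_gt hL
  set L := Real.log w with hLdef
  have e1 : (∫ u : ℝ, (Set.Ioo (0:ℝ) (α*L)).indicator
        (fun u => u / Real.Gamma (1 - u / L) * Real.exp (-u)) u)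
      = ∫ u in (0:ℝ)..(α*L), u / Real.Gamma (1 - u / L) * Real.exp (-u) := by
    rw [MeasureTheory.integral_indicator measurableSet_Ioo,
      ← MeasureTheory.integral_Ioc_eq_integral_Ioo,
      ← intervalIntegral.integral_of_le (by positivity : (0:ℝ) ≤ α * L)]
  have e2 : (∫ u in (0:ℝ)..(α*L), u / Real.Gamma (1 - u / L) * Real.exp (-u))
      = ∫ u in (0:ℝ)..(α*L),
          (fun s => L * (s / Real.Gamma (1-s)) * Real.exp (-(s*L))) (u / L) := by
    refine intervalIntegral.integral_congr (fun u _ => ?_)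
    simp only
    rw [div_mul_cancel₀ _ hLne, div_div, mul_div_assoc', mul_div_mul_left _ _ hLne]
  have e3 : (∫ u in (0:ℝ)..(α*L),
        (fun s => L * (s / Real.Gamma (1-s)) * Real.exp (-(s*L))) (u / L))
      = L • ∫ s in (0:ℝ)..α, L * (s / Real.Gamma (1-s)) * Real.exp (-(s*L)) := by
    have h := intervalIntegral.integral_comp_div (a := (0:ℝ)) (b := α*L) (c := L)
      (f := fun s => L * (s / Real.Gamma (1-s)) * Real.exp (-(s*L))) hLne
    rw [zero_div, mul_div_cancel_right₀ _ hLne] at h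
    exact h
  rw [e1, e2, e3, smul_eq_mul, ← intervalIntegral.integral_const_mul,
    ← intervalIntegral.integral_const_mul]
  refine intervalIntegral.integral_congr (fun s _ => ?_)
  have hrw : w ^ (-1-s) = Real.exp (L * (-1-s)) := Real.rpow_def_of_pos hw0 _
  have hwe : w = Real.exp L := (Real.exp_log hw0).symm
  rw [hrw]
  rw [show L^2 * w * (s / Real.Gamma (1-s) * Real.exp (L * (-1-s)))
      = L * (L * (s / Real.Gamma (1-s)) * (w * Real.exp (L * (-1-s)))) by ring]
  rw [hwe, ← Real.exp_add]
  congr 2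
  ring

end Aux

/-- Lévy intensity of the mixed stable CRM. -/
noncomputable def rhoMSt (α τ w : ℝ) : ℝ :=
  (1 / (α - τ)) * ∫ s in τ..α, (s / Real.Gamma (1 - s)) * w ^ (-1 - s)

theorem stmt_13 (α : ℝ) (h0 : 0 < α) (h1 : α ≤ 1) :
    Filter.Tendsto
      (fun w : ℝ => rhoMSt α 0 w / ((1 / α) * w ^ (-1 : ℝ) / (Real.log w) ^ 2))
      Filter.atTop (nhds 1) := by
  refine (mainLimit α h0 h1).congr' ?_
  filter_upwards [eventually_gt_atTop (1:ℝ)] with w hw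
  have hw0 : (0:ℝ) < w := lt_trans one_pos hw
  have hL : 0 < Real.log w := Real.log_pos hw
  rw [← keyEq α h0 w hw]
  rw [rhoMSt, sub_zero, Real.rpow_neg_one]
  have hαne : α ≠ 0 := ne_of_gt h0
  have hwne : w ≠ 0 := ne_of_gt hw0
  have hLne : Real.log w ≠ 0 := ne_of_gt hL
  field_simp
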